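/- For any matrix B ∈ ℝ^{m×n} and any matrix C ∈ ℝ^{m×n} with rank(C) ≤ k, the largest singular value of the residual satisfies σ₁(B − C) ≥ σ_{k+1}(B). -/

import Mathlib

open Matrix Finset Module

lemma dot_eq_inner {n : ℕ} (a b : EuclideanSpace ℝ (Fin n)) :
    (inner ℝ a b : ℝ) = (a : Fin n → ℝ) ⬝ᵥ (b : Fin n → ℝ) := by
  simp [PiLp.inner_apply, RCLike.inner_apply, starRingEnd_apply, dotProduct]
  exact Finset.sum_congr rfl fun _ _ => mul_comm _ _

lemma dotProduct_sum' {n : ℕ} {ι : Type*} (s : Finset ι) (v : Fin n → ℝ) (f : ι → Fin n → ℝ) :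
    v ⬝ᵥ (∑ i ∈ s, f i) = ∑ i ∈ s, v ⬝ᵥ f i := by
  simp only [dotProduct, Finset.sum_apply, Finset.mul_sum]
  exact Finset.sum_comm

lemma eigen_expand {n : ℕ} {A : Matrix (Fin n) (Fin n) ℝ} (hA : A.IsHermitian) (x : Fin n → ℝ) :
    x = ∑ i, ((hA.eigenvectorBasis i : Fin n → ℝ) ⬝ᵥ x) • (hA.eigenvectorBasis i : Fin n → ℝ) := by
  have h := (hA.eigenvectorBasis).sum_repr (WithLp.toLp 2 x)
  simp_rw [OrthonormalBasis.repr_apply_apply, dot_eq_inner] at h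
  have h' := congrArg (WithLp.ofLp (p := 2)) h
  simp only [WithLp.ofLp_sum, WithLp.ofLp_smul, WithLp.ofLp_toLp] at h'
  exact h'.symm

lemma quad_expand {n : ℕ} {A : Matrix (Fin n) (Fin n) ℝ} (hA : A.IsHermitian) (x : Fin n → ℝ) :
    x ⬝ᵥ (A *ᵥ x) = ∑ i, hA.eigenvalues i * ((hA.eigenvectorBasis i : Fin n → ℝ) ⬝ᵥ x)^2 := by
  have hAx : A *ᵥ x = ∑ i, ((hA.eigenvectorBasis i : Fin n → ℝ) ⬝ᵥ x) •
      (hA.eigenvalues i • (hA.eigenvectorBasis i : Fin n → ℝ)) := by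
    conv_lhs => rw [eigen_expand hA x]
    rw [show A *ᵥ (∑ i, ((hA.eigenvectorBasis i : Fin n → ℝ) ⬝ᵥ x) • (hA.eigenvectorBasis i : Fin n → ℝ))
        = A.mulVecLin (∑ i, ((hA.eigenvectorBasis i : Fin n → ℝ) ⬝ᵥ x) • (hA.eigenvectorBasis i : Fin n → ℝ)) from rfl,
      map_sum]
    refine Finset.sum_congr rfl fun i _ => ?_
    rw [LinearMap.map_smul, mulVecLin_apply]
    exact congrArg (fun y => (((hA.eigenvectorBasis i : Fin n → ℝ) ⬝ᵥ x)) • y)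
      (hA.mulVec_eigenvectorBasis i)
  rw [hAx, dotProduct_sum']
  refine Finset.sum_congr rfl fun i _ => ?_
  rw [dotProduct_smul, dotProduct_smul, smul_eq_mul, smul_eq_mul, dotProduct_comm]
  ring

lemma dot_self_expand {n : ℕ} {A : Matrix (Fin n) (Fin n) ℝ} (hA : A.IsHermitian) (x : Fin n → ℝ) :
    x ⬝ᵥ x = ∑ i, ((hA.eigenvectorBasis i : Fin n → ℝ) ⬝ᵥ x)^2 := by
  nth_rewrite 2 [eigen_expand hA x]
  rw [dotProduct_sum']
  refine Finset.sum_congr rfl fun i _ => ?_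
  rw [dotProduct_smul, smul_eq_mul, dotProduct_comm, sq]

lemma sorted_max {n : ℕ} (f : Fin n → ℝ) (h0 : 0 < n) (i : Fin n) :
    f i ≤ (f ∘ Tuple.sort f) (Fin.rev ⟨0, h0⟩) := by
  have h1 : f i = (f ∘ Tuple.sort f) ((Tuple.sort f)⁻¹ i) := by simp
  rw [h1]
  apply Tuple.monotone_sort f
  have h2 := ((Tuple.sort f)⁻¹ i).isLt
  simp only [Fin.le_def, Fin.val_rev]
  omega

set_option maxHeartbeats 400000 in
lemma span_basis_finrank {n : ℕ} (v : OrthonormalBasis (Fin n) ℝ (EuclideanSpace ℝ (Fin n)))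
    (S : Finset (Fin n)) :
    finrank ℝ (Submodule.span ℝ (Set.range (fun j : S => (v (j : Fin n) : Fin n → ℝ)))) = S.card := by
  have h1 : LinearIndependent ℝ (fun j : S => v (j : Fin n)) :=
    (v.orthonormal.linearIndependent).comp _ Subtype.val_injective
  have li : LinearIndependent ℝ (fun j : S => (v (j : Fin n) : Fin n → ℝ)) :=
    h1.map' (WithLp.linearEquiv 2 ℝ (Fin n → ℝ)).toLinearMap (WithLp.linearEquiv 2 ℝ (Fin n → ℝ)).ker
  rw [finrank_span_eq_card li, Fintype.card_coe]

lemma dot_eq_zero_of_mem_span {n : ℕ} (v : OrthonormalBasis (Fin n) ℝ (EuclideanSpace ℝ (Fin n)))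
    (S : Finset (Fin n)) {i : Fin n} (hi : i ∉ S) {x : Fin n → ℝ}
    (hx : x ∈ Submodule.span ℝ (Set.range (fun j : S => (v (j : Fin n) : Fin n → ℝ)))) :
    (v i : Fin n → ℝ) ⬝ᵥ x = 0 := by
  induction hx using Submodule.span_induction with
  | mem y hy =>
    obtain ⟨j, rfl⟩ := hy
    have hne : i ≠ (j : Fin n) := fun h => hi (h ▸ j.2)
    have h2 : (inner ℝ (v i) (v (j : Fin n)) : ℝ) = 0 := v.orthonormal.2 hne
    rw [dot_eq_inner] at h2
    exact h2
  | zero => exact dotProduct_zero _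
  | add a b _ _ ha hb => rw [dotProduct_add, ha, hb, add_zero]
  | smul r a _ ha => rw [dotProduct_smul, ha, smul_zero]

lemma dot_transpose_mul {m n : ℕ} (M : Matrix (Fin m) (Fin n) ℝ) (y : Fin n → ℝ) :
    y ⬝ᵥ ((Mᴴ * M) *ᵥ y) = (M *ᵥ y) ⬝ᵥ (M *ᵥ y) := by
  rw [← mulVec_mulVec, dotProduct_mulVec, conjTranspose_eq_transpose_of_trivial,
    vecMul_transpose]

theorem Matrix.isHermitian_transpose_mul_self {m n α : Type*} [Fintype m] [CommSemiring α]
    [StarRing α] [TrivialStar α] (A : Matrix m n α) : (A.transpose * A).IsHermitian := by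
  simpa [Matrix.conjTranspose_eq_transpose_of_trivial] using
    Matrix.isHermitian_conjTranspose_mul_self A

/-- The `k`-th largest singular value (0-indexed, so `sv B k = σ_{k+1}(B)`), 0 if `k ≥ n`. -/
noncomputable def sv {m n : ℕ} (B : Matrix (Fin m) (Fin n) ℝ) (k : ℕ) : ℝ :=
  if h : k < n then
    Real.sqrt (((Matrix.isHermitian_transpose_mul_self B).eigenvalues ∘
      Tuple.sort ((Matrix.isHermitian_transpose_mul_self B).eigenvalues)) (Fin.rev ⟨k, h⟩))
  else 0

/-- For any matrix `C` of rank at most `k`, the largest singular value of the residual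
satisfies `σ₁(B − C) ≥ σ_{k+1}(B)` (0-indexed: `sv (B - C) 0 ≥ sv B k`). -/
theorem residual_opnorm_ge_singular_value {m n : ℕ} (B C : Matrix (Fin m) (Fin n) ℝ)
    (k : ℕ) (hC : C.rank ≤ k) :
    sv (B - C) 0 ≥ sv B k := by
  have hsv0 : 0 ≤ sv (B - C) 0 := by
    unfold sv; split_ifs with h
    · exact Real.sqrt_nonneg _
    · exact le_refl 0
  by_cases hk : k < n
  swap
  · rw [ge_iff_le, sv, dif_neg hk]; exact hsv0
  have hn : 0 < n := Nat.lt_of_le_of_lt (Nat.zero_le k) hk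
  have hA := Matrix.isHermitian_transpose_mul_self B
  have hD := Matrix.isHermitian_transpose_mul_self (B - C)
  set v := hA.eigenvectorBasis with hv
  set μ := hA.eigenvalues with hμ
  set σ := Tuple.sort μ with hσ
  set t : Fin n := Fin.rev ⟨k, hk⟩ with ht
  set S : Finset (Fin n) := Finset.image σ (Finset.Ici t) with hS
  have htval : (t : ℕ) = n - (k + 1) := by rw [ht, Fin.val_rev]
  have hcardS : S.card = k + 1 := by
    rw [hS, Finset.card_image_of_injective _ σ.injective, Fin.card_Ici, htval]
    omega
  set V : Submodule ℝ (Fin n → ℝ) :=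
    Submodule.span ℝ (Set.range (fun j : S => (v (j : Fin n) : Fin n → ℝ))) with hVdef
  set K : Submodule ℝ (Fin n → ℝ) := LinearMap.ker C.mulVecLin with hKdef
  have hVrank : finrank ℝ V = k + 1 := by
    exact (span_basis_finrank v S).trans hcardS
  have hKrank : n - k ≤ finrank ℝ K := by
    have h1 := LinearMap.finrank_range_add_finrank_ker C.mulVecLin
    rw [Module.finrank_fintype_fun_eq_card, Fintype.card_fin] at h1
    have h2 : C.rank = finrank ℝ (LinearMap.range C.mulVecLin) := rfl
    rw [h2] at hC
    rw [hKdef]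
    omega
  have hpos : 0 < finrank ℝ ↥(V ⊓ K) := by
    have hsum := Submodule.finrank_sup_add_finrank_inf_eq V K
    have hle : finrank ℝ ↥(V ⊔ K) ≤ n := by
      have h3 := Submodule.finrank_le (V ⊔ K)
      rwa [Module.finrank_fintype_fun_eq_card, Fintype.card_fin] at h3
    omega
  obtain ⟨x, hxne⟩ := Module.finrank_pos_iff_exists_ne_zero.mp hpos
  obtain ⟨hxV, hxK⟩ := Submodule.mem_inf.mp x.2
  set y : Fin n → ℝ := (x : Fin n → ℝ) with hy
  have hyne : y ≠ 0 := fun h => hxne (Subtype.ext h)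
  have hyy : 0 < y ⬝ᵥ y := by
    have h0 : 0 ≤ y ⬝ᵥ y := Finset.sum_nonneg fun i _ => mul_self_nonneg _
    rcases h0.lt_or_eq with h | h
    · exact h
    · exact absurd (dotProduct_self_eq_zero.mp h.symm) hyne
  have hCy : C *ᵥ y = 0 := hxK
  have hlow : (μ ∘ σ) t * (y ⬝ᵥ y) ≤ y ⬝ᵥ ((Bᴴ * B) *ᵥ y) := by
    rw [conjTranspose_eq_transpose_of_trivial, quad_expand hA y, dot_self_expand hA y, Finset.mul_sum]
    refine Finset.sum_le_sum fun i _ => ?_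
    by_cases hiS : i ∈ S
    · obtain ⟨j, hj, rfl⟩ := Finset.mem_image.mp hiS
      have hmono : (μ ∘ σ) t ≤ (μ ∘ σ) j := Tuple.monotone_sort μ (Finset.mem_Ici.mp hj)
      exact mul_le_mul_of_nonneg_right hmono (sq_nonneg _)
    · rw [dot_eq_zero_of_mem_span v S hiS hxV]
      simp
  have heq : y ⬝ᵥ ((Bᴴ * B) *ᵥ y) = y ⬝ᵥ (((B - C)ᴴ * (B - C)) *ᵥ y) := by
    rw [dot_transpose_mul, dot_transpose_mul, sub_mulVec, hCy, sub_zero]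
  have hup : y ⬝ᵥ (((B - C)ᴴ * (B - C)) *ᵥ y) ≤
      (hD.eigenvalues ∘ Tuple.sort hD.eigenvalues) (Fin.rev ⟨0, hn⟩) * (y ⬝ᵥ y) := by
    rw [conjTranspose_eq_transpose_of_trivial, quad_expand hD y, dot_self_expand hD y, Finset.mul_sum]
    exact Finset.sum_le_sum fun i _ =>
      mul_le_mul_of_nonneg_right (sorted_max hD.eigenvalues hn i) (sq_nonneg _)
  have hfinal : (μ ∘ σ) t ≤ (hD.eigenvalues ∘ Tuple.sort hD.eigenvalues) (Fin.rev ⟨0, hn⟩) :=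
    le_of_mul_le_mul_right (by linarith) hyy
  rw [ge_iff_le, sv, sv, dif_pos hk, dif_pos hn]
  exact Real.sqrt_le_sqrt hfinal
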